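/- Let $x_1,\dots,x_n$ be real numbers with $\sum_{i=1}^n x_i = 0$ and $x_i \le s$ for all $i$, where $s > 0$. Then $\sum_{i=1}^n x_i^3 \le \frac{s(n-2)}{n-1} \sum_{i=1}^n x_i^2$. -/

import Mathlib

open Finset

lemma arith_key (e s M P A B C : ℝ) (he : 1 ≤ e) (hs : 0 < s) (hP : 0 < P)
    (hM1 : M ≤ s) (hM2 : M ≤ P)
    (hA0 : 0 ≤ A) (hA : A ≤ M * P) (hB : P ^ 2 ≤ e * B) (hB0 : 0 ≤ B)
    (hC : B ^ 2 ≤ P * C) :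
    M * A - C ≤ s * (e - 1) / e * (A + B) := by
  have he0 : 0 < e := by linarith
  set c := s * (e - 1) / e with hc
  have hc0 : 0 ≤ c := by
    apply div_nonneg (mul_nonneg hs.le (by linarith)) he0.le
  have hce : c * e = s * (e - 1) := by rw [hc]; field_simp [he0.ne']
  have hC0 : 0 ≤ C := by nlinarith [sq_nonneg B]
  rcases le_or_gt M c with h | h
  · nlinarith [mul_nonneg hc0 hB0, mul_nonneg (sub_nonneg.2 h) hA0]
  · have hM0 : 0 ≤ M := le_trans hc0 h.le
    have key : e * (M - c) ≤ P := by nlinarith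
    have hu0 : 0 ≤ e * (M - c) := by nlinarith
    have h1 : (M - c) * A ≤ (M - c) * (M * P) :=
      mul_le_mul_of_nonneg_left hA (by linarith)
    have g1 : (e * (M - c)) * (e * (M - c)) ≤ P * P := mul_le_mul key key hu0 hP.le
    have g3 : (e * (M - c)) * (e * (M - c)) * P ^ 2 ≤ P * P * P ^ 2 :=
      mul_le_mul_of_nonneg_right g1 (sq_nonneg P)
    have g4 : (c * e) * ((e * (M - c)) * P ^ 2) ≤ (c * e) * (P * P ^ 2) := by
      apply mul_le_mul_of_nonneg_left _ (by positivity)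
      exact mul_le_mul_of_nonneg_right key (sq_nonneg P)
    have g5 : (P ^ 2) * (P ^ 2) ≤ (e * B) * (e * B) :=
      mul_le_mul hB hB (sq_nonneg P) (by positivity)
    have g6 : (c * e) * (P * P ^ 2) ≤ (c * e) * (P * (e * B)) := by
      apply mul_le_mul_of_nonneg_left _ (by positivity)
      exact mul_le_mul_of_nonneg_left hB hP.le
    have h2 : e ^ 2 * ((M - c) * (M * P) * P) ≤ e ^ 2 * (B ^ 2 + c * B * P) := by
      nlinarith
    have h2' : (M - c) * (M * P) * P ≤ B ^ 2 + c * B * P :=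
      (mul_le_mul_iff_of_pos_left (by positivity : (0:ℝ) < e ^ 2)).mp h2
    nlinarith [mul_le_mul_of_nonneg_right h1 hP.le]

theorem stmt_0 (n : ℕ) (hn : 2 ≤ n) (s : ℝ) (hs : 0 < s) (x : Fin n → ℝ)
    (hsum : ∑ i, x i = 0) (hbd : ∀ i, x i ≤ s) :
    ∑ i, (x i) ^ 3 ≤ s * (n - 2) / (n - 1) * ∑ i, (x i) ^ 2 := by
  have hn2 : (2:ℝ) ≤ (n:ℝ) := by exact_mod_cast hn
  set Pos := Finset.univ.filter (fun i => 0 ≤ x i) with hPosdef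
  set Neg := Finset.univ.filter (fun i => ¬ 0 ≤ x i) with hNegdef
  have hsplit : ∀ f : Fin n → ℝ,
      ∑ i ∈ Pos, f i + ∑ i ∈ Neg, f i = ∑ i, f i := fun f =>
    Finset.sum_filter_add_sum_filter_not _ _ f
  set P := ∑ i ∈ Pos, x i with hPdef
  set A := ∑ i ∈ Pos, (x i) ^ 2 with hAdef
  set B := ∑ i ∈ Neg, (x i) ^ 2 with hBdef
  set C := ∑ i ∈ Neg, (-x i) ^ 3 with hCdef
  have hNegsum : ∑ i ∈ Neg, x i = -P := by
    have := hsplit x; rw [hsum] at this; linarith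
  have hP0 : 0 ≤ P :=
    Finset.sum_nonneg fun i hi => (Finset.mem_filter.mp hi).2
  have hA0 : 0 ≤ A := Finset.sum_nonneg fun i _ => sq_nonneg _
  have hB0 : 0 ≤ B := Finset.sum_nonneg fun i _ => sq_nonneg _
  have hsq : ∑ i, (x i) ^ 2 = A + B := (hsplit _).symm
  have hcube : ∑ i, (x i) ^ 3 = (∑ i ∈ Pos, (x i) ^ 3) - C := by
    rw [← hsplit (fun i => (x i) ^ 3)]
    have : ∑ i ∈ Neg, (x i) ^ 3 = -C := by
      rw [hCdef, ← Finset.sum_neg_distrib]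
      exact Finset.sum_congr rfl fun i _ => by ring
    rw [this]; ring
  rcases eq_or_lt_of_le hP0 with hP | hP
  · -- P = 0 : all x i = 0
    have hNegempty : Neg = ∅ := by
      by_contra h
      have hne : Neg.Nonempty := Finset.nonempty_iff_ne_empty.mpr h
      have : ∑ i ∈ Neg, x i < 0 :=
        Finset.sum_neg (fun i hi => not_le.mp (Finset.mem_filter.mp hi).2) hne
      rw [hNegsum, ← hP] at this; linarith
    have hx0 : ∀ i, x i = 0 := by
      intro i
      have hiPos : i ∈ Pos := by
        rcases le_or_gt 0 (x i) with h | h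
        · exact Finset.mem_filter.mpr ⟨Finset.mem_univ i, h⟩
        · exfalso
          have : i ∈ Neg := Finset.mem_filter.mpr ⟨Finset.mem_univ i, not_le.mpr h⟩
          rw [hNegempty] at this; exact absurd this (Finset.notMem_empty i)
      have := (Finset.sum_eq_zero_iff_of_nonneg
        (fun j hj => (Finset.mem_filter.mp hj).2)).mp hP.symm i hiPos
      exact this
    simp [hx0]
  · -- main case, P > 0
    set M := min s P with hMdef
    have hM1 : M ≤ s := min_le_left _ _
    have hM2 : M ≤ P := min_le_right _ _
    have hM0 : 0 ≤ M := le_min hs.le hP0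
    have hxle : ∀ i ∈ Pos, x i ≤ M := by
      intro i hi
      refine le_min (hbd i) ?_
      exact Finset.single_le_sum (fun j hj => (Finset.mem_filter.mp hj).2) hi
    have hA : A ≤ M * P := by
      rw [hAdef, hPdef, Finset.mul_sum]
      refine Finset.sum_le_sum fun i hi => ?_
      have h0 : 0 ≤ x i := (Finset.mem_filter.mp hi).2
      have := hxle i hi
      nlinarith
    have hT : ∑ i ∈ Pos, (x i) ^ 3 ≤ M * A := by
      rw [hAdef, Finset.mul_sum]
      refine Finset.sum_le_sum fun i hi => ?_
      have h0 : 0 ≤ x i := (Finset.mem_filter.mp hi).2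
      have := hxle i hi
      nlinarith
    have hneg : ∀ i ∈ Neg, 0 ≤ -x i := fun i hi => by
      have := not_le.mp (Finset.mem_filter.mp hi).2; linarith
    have hnegP : ∑ i ∈ Neg, (-x i) = P := by
      rw [Finset.sum_neg_distrib, hNegsum]; ring
    have hCau : B ^ 2 ≤ P * C := by
      have key := Finset.sum_mul_sq_le_sq_mul_sq Neg
        (fun i => Real.sqrt (-x i)) (fun i => (-x i) * Real.sqrt (-x i))
      have e1 : ∑ i ∈ Neg, Real.sqrt (-x i) * ((-x i) * Real.sqrt (-x i)) = B := by
        rw [hBdef]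
        refine Finset.sum_congr rfl fun i hi => ?_
        have h := hneg i hi
        have : Real.sqrt (-x i) * Real.sqrt (-x i) = -x i := Real.mul_self_sqrt h
        nlinarith [this]
      have e2 : ∑ i ∈ Neg, (Real.sqrt (-x i)) ^ 2 = P := by
        rw [← hnegP]
        exact Finset.sum_congr rfl fun i hi => Real.sq_sqrt (hneg i hi)
      have e3 : ∑ i ∈ Neg, ((-x i) * Real.sqrt (-x i)) ^ 2 = C := by
        rw [hCdef]
        refine Finset.sum_congr rfl fun i hi => ?_
        have h := hneg i hi
        have : Real.sqrt (-x i) ^ 2 = -x i := Real.sq_sqrt h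
        rw [mul_pow, this]; ring
      rw [e1, e2, e3] at key
      exact key
    have hcard : (Neg.card : ℝ) ≤ (n : ℝ) - 1 := by
      have hPosne : Pos.Nonempty := by
        rw [Finset.nonempty_iff_ne_empty]
        intro h
        rw [hPdef, h, Finset.sum_empty] at hP
        exact lt_irrefl _ hP
      have h1 : 1 ≤ Pos.card := Finset.card_pos.mpr hPosne
      have h2 : Pos.card + Neg.card = n := by
        rw [hPosdef, hNegdef]
        rw [Finset.card_filter_add_card_filter_not]
        simp
      have : Neg.card ≤ n - 1 := by omega
      have hn1 : 1 ≤ n := by omega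
      calc (Neg.card : ℝ) ≤ ((n - 1 : ℕ) : ℝ) := by exact_mod_cast this
        _ = (n : ℝ) - 1 := by
            have : ((n - 1 : ℕ) : ℝ) = (n : ℝ) - 1 := by
              push_cast [Nat.cast_sub hn1]; ring
            rw [this]
    have hB : P ^ 2 ≤ ((n : ℝ) - 1) * B := by
      have key := Finset.sum_mul_sq_le_sq_mul_sq Neg (fun _ => (1:ℝ)) (fun i => -x i)
      have e1 : ∑ i ∈ Neg, (1:ℝ) * (-x i) = P := by
        simp only [one_mul]; exact hnegP
      have e2 : ∑ _i ∈ Neg, (1:ℝ) ^ 2 = (Neg.card : ℝ) := by simp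
      have e3 : ∑ i ∈ Neg, (-x i) ^ 2 = B := by
        rw [hBdef]; exact Finset.sum_congr rfl fun i _ => by ring
      rw [e1, e2, e3] at key
      calc P ^ 2 ≤ (Neg.card : ℝ) * B := key
        _ ≤ ((n : ℝ) - 1) * B := mul_le_mul_of_nonneg_right hcard hB0
    have final := arith_key ((n:ℝ) - 1) s M P A B C (by linarith) hs hP
      hM1 hM2 hA0 hA hB hB0 hCau
    calc ∑ i, (x i) ^ 3 = (∑ i ∈ Pos, (x i) ^ 3) - C := hcube
      _ ≤ M * A - C := by linarith
      _ ≤ s * (((n:ℝ) - 1) - 1) / ((n:ℝ) - 1) * (A + B) := final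
      _ = s * ((n:ℝ) - 2) / ((n:ℝ) - 1) * ∑ i, (x i) ^ 2 := by
          rw [hsq]; ring_nf
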